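/- arXiv:1807.07120 — 3 statements merged into one kernel-verified Lean document; each statement's English description precedes it below -/
import Mathlib

section
/- Consider the parametric quadratic program QP(θ): minimize (1/2) xᵀ Q x + cᵀ x over x ∈ ℝⁿ subject to F x ≤ b + E θ, with Q symmetric positive definite. Let Θ_feas = {θ ∈ ℝᵖ : ∃ x, F x ≤ b + E θ}, and for θ ∈ Θ_feas let x*(θ) denote the unique minimizer of QP(θ). Then the map θ ↦ x*(θ) is continuous on Θ_feas. -/
open Matrix Finset



lemma abs_dot_le {n : ℕ} (g v : Fin n → ℝ) (e : ℝ) (he : 0 ≤ e)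
    (h : ∀ m, |v m| ≤ e) : |g ⬝ᵥ v| ≤ (∑ m, |g m|) * e := by
  calc |g ⬝ᵥ v| ≤ ∑ m, |g m * v m| := Finset.abs_sum_le_sum_abs _ _
    _ ≤ ∑ m, |g m| * e := by
        refine Finset.sum_le_sum fun m _ => ?_
        rw [abs_mul]
        exact mul_le_mul_of_nonneg_left (h m) (abs_nonneg _)
    _ = (∑ m, |g m|) * e := (Finset.sum_mul _ _ _).symm

lemma dot_split {n : ℕ} (v x : Fin (n+1) → ℝ) :
    v ⬝ᵥ x = (fun m => v (Fin.castSucc m)) ⬝ᵥ (fun m => x (Fin.castSucc m))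
      + v (Fin.last n) * x (Fin.last n) := by
  simp [dotProduct, Fin.sum_univ_castSucc]

theorem lsc_aux : ∀ (n : ℕ) (ι : Type) (_ : Fintype ι) (A : ι → (Fin n → ℝ))
    (x₀ : Fin n → ℝ) (d₀ : ι → ℝ), (∀ i, A i ⬝ᵥ x₀ ≤ d₀ i) →
    ∀ ε : ℝ, 0 < ε →
    ∃ δ : ℝ, 0 < δ ∧ ∀ d : ι → ℝ, (∀ i, |d i - d₀ i| ≤ δ) →
      (∃ x, ∀ i, A i ⬝ᵥ x ≤ d i) →
      ∃ y, (∀ i, A i ⬝ᵥ y ≤ d i) ∧ ∀ j, |y j - x₀ j| ≤ ε := by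
  intro n
  induction n with
  | zero =>
    intro ι _ A x₀ d₀ h₀ ε hε
    refine ⟨1, one_pos, fun d hd hfe => ?_⟩
    obtain ⟨x, hx⟩ := hfe
    refine ⟨x₀, fun i => ?_, fun j => j.elim0⟩
    have hxx : x = x₀ := by funext j; exact j.elim0
    exact hxx ▸ hx i
  | succ n IH =>
    intro ι inst A x₀ d₀ h₀ ε hε
    classical
    set a : ι → ℝ := fun i => A i (Fin.last n) with ha
    set g : ι → Fin n → ℝ := fun i m => A i (Fin.castSucc m) with hg
    set x₀' : Fin n → ℝ := fun m => x₀ (Fin.castSucc m) with hx₀'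
    set SS : ι → ℝ := fun i => ∑ m, |g i m| with hSS
    have hSS0 : ∀ i, 0 ≤ SS i := fun i => Finset.sum_nonneg fun m _ => abs_nonneg _
    set κ : ι → ℝ := fun i => if a i = 0 then 0 else (1 + SS i)/|a i| with hκ
    have hκ0 : ∀ i, 0 ≤ κ i := by
      intro i
      simp only [hκ]
      split_ifs with h
      · exact le_rfl
      · positivity
    set K : ℝ := 1 + ∑ i, κ i with hK
    have hK1 : 1 ≤ K := by
      rw [hK]
      have : 0 ≤ ∑ i, κ i := Finset.sum_nonneg fun i _ => hκ0 i
      linarith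
    have hKpos : 0 < K := lt_of_lt_of_le one_pos hK1
    have hκK : ∀ i, a i ≠ 0 → (1 + SS i)/|a i| ≤ K := by
      intro i hi
      have h1 : κ i = (1 + SS i)/|a i| := by simp only [hκ, if_neg hi]
      have h2 : κ i ≤ ∑ j, κ j :=
        Finset.single_le_sum (fun j (_ : j ∈ univ) => hκ0 j) (mem_univ i)
      rw [← h1]; rw [hK]; linarith
    have hinvK : ∀ i, a i ≠ 0 → 1/|a i| ≤ K := by
      intro i hi
      refine le_trans ?_ (hκK i hi)
      apply div_le_div_of_nonneg_right (by linarith [hSS0 i]) (abs_nonneg _) |>.trans_eq rfl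
    -- the reduced system
    set G : ({i : ι // a i = 0} ⊕ ({i : ι // 0 < a i} × {i : ι // a i < 0})) → (Fin n → ℝ) :=
      Sum.elim (fun z => g z.1)
        (fun pq => (a pq.1.1)⁻¹ • g pq.1.1 - (a pq.2.1)⁻¹ • g pq.2.1) with hG
    set hvec : (ι → ℝ) → ({i : ι // a i = 0} ⊕ ({i : ι // 0 < a i} × {i : ι // a i < 0})) → ℝ :=
      fun d => Sum.elim (fun z => d z.1)
        (fun pq => d pq.1.1 / a pq.1.1 - d pq.2.1 / a pq.2.1) with hvecdef
    -- downward transfer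
    have hsplit : ∀ (x : Fin (n+1) → ℝ) (d : ι → ℝ), (∀ i, A i ⬝ᵥ x ≤ d i) →
        ∀ i, g i ⬝ᵥ (fun m => x (Fin.castSucc m)) + a i * x (Fin.last n) ≤ d i := by
      intro x d hx i
      have := hx i
      rwa [dot_split] at this
    have hdown : ∀ (x : Fin (n+1) → ℝ) (d : ι → ℝ), (∀ i, A i ⬝ᵥ x ≤ d i) →
        ∀ i', G i' ⬝ᵥ (fun m => x (Fin.castSucc m)) ≤ hvec d i' := by
      intro x d hx i'
      have hsp := hsplit x d hx
      cases i' with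
      | inl z =>
        have := hsp z.1
        rw [z.2] at this
        simpa [hG, hvecdef] using this
      | inr pq =>
        obtain ⟨⟨p, hp⟩, ⟨q, hq⟩⟩ := pq
        have h1 := hsp p
        have h2 := hsp q
        have e1 : (g p ⬝ᵥ fun m => x m.castSucc) / a p + x (Fin.last n) ≤ d p / a p := by
          have := div_le_div_of_nonneg_right h1 hp.le
          rwa [add_div, mul_div_cancel_left₀ _ (ne_of_gt hp)] at this
        have e2 : d q / a q ≤ (g q ⬝ᵥ fun m => x m.castSucc) / a q + x (Fin.last n) := by
          have := (div_le_div_right_of_neg hq).mpr h2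
          rwa [add_div, mul_div_cancel_left₀ _ (ne_of_lt hq)] at this
        simp only [hG, hvecdef, Sum.elim_inr, sub_dotProduct, smul_dotProduct, smul_eq_mul,
          inv_mul_eq_div]
        linarith
    -- upward transfer
    have hup : ∀ (y' : Fin n → ℝ) (t : ℝ) (d : ι → ℝ),
        (∀ p : {i : ι // 0 < a i}, t ≤ (d p.1 - g p.1 ⬝ᵥ y') / a p.1) →
        (∀ q : {i : ι // a i < 0}, (d q.1 - g q.1 ⬝ᵥ y') / a q.1 ≤ t) →
        (∀ z : {i : ι // a i = 0}, g z.1 ⬝ᵥ y' ≤ d z.1) →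
        ∀ i, A i ⬝ᵥ ((Fin.snoc y' t : Fin (n+1) → ℝ)) ≤ d i := by
      intro y' t d hP hN hZ i
      rw [dot_split]
      have hcs : (fun m => (Fin.snoc y' t : Fin (n+1) → ℝ) (Fin.castSucc m)) = y' := by
        funext m; simp
      rw [hcs, Fin.snoc_last]
      show g i ⬝ᵥ y' + a i * t ≤ d i
      rcases lt_trichotomy (a i) 0 with h | h | h
      · have h2 : a i * t ≤ a i * ((d i - g i ⬝ᵥ y') / a i) :=
          mul_le_mul_of_nonpos_left (hN ⟨i, h⟩) (le_of_lt h)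
        rw [mul_comm (a i) ((d i - g i ⬝ᵥ y') / a i), div_mul_cancel₀ _ (ne_of_lt h)] at h2
        linarith
      · have := hZ ⟨i, h⟩
        rw [h]; simpa using this
      · have h2 : a i * t ≤ a i * ((d i - g i ⬝ᵥ y') / a i) :=
          mul_le_mul_of_nonneg_left (hP ⟨i, h⟩) (le_of_lt h)
        rw [mul_comm (a i) ((d i - g i ⬝ᵥ y') / a i), div_mul_cancel₀ _ (ne_of_gt h)] at h2
        linarith
    -- base estimates from feasibility of x₀
    have hLbase : ∀ q, a q < 0 → (d₀ q - g q ⬝ᵥ x₀')/a q ≤ x₀ (Fin.last n) := by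
      intro q hq
      have h1 : g q ⬝ᵥ x₀' + a q * x₀ (Fin.last n) ≤ d₀ q := hsplit x₀ d₀ h₀ q
      rw [div_le_iff_of_neg hq]
      nlinarith
    have hUbase : ∀ p, 0 < a p → x₀ (Fin.last n) ≤ (d₀ p - g p ⬝ᵥ x₀')/a p := by
      intro p hp
      have h1 : g p ⬝ᵥ x₀' + a p * x₀ (Fin.last n) ≤ d₀ p := hsplit x₀ d₀ h₀ p
      rw [le_div_iff₀ hp]
      nlinarith
    -- choose constants
    set ε₁ : ℝ := min ε (ε/(4*K)) with hε₁def
    have hε₁pos : 0 < ε₁ := lt_min hε (by positivity)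
    have hε₁le : ε₁ ≤ ε/(4*K) := min_le_right _ _
    have hε₁leε : ε₁ ≤ ε := min_le_left _ _
    have h₀' : ∀ i', G i' ⬝ᵥ x₀' ≤ hvec d₀ i' := hdown x₀ d₀ h₀
    obtain ⟨δ₂, hδ₂pos, Hih⟩ := IH _ inferInstance G x₀' (hvec d₀) h₀' ε₁ hε₁pos
    set δ : ℝ := min (ε/(4*K)) (δ₂/(2*K)) with hδdef
    have hδpos : 0 < δ := lt_min (by positivity) (by positivity)
    have hδ1 : δ ≤ ε/(4*K) := min_le_left _ _
    have hδ2 : δ ≤ δ₂/(2*K) := min_le_right _ _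
    have hδle2 : δ ≤ δ₂ := hδ2.trans (div_le_self hδ₂pos.le (by linarith))
    refine ⟨δ, hδpos, fun d hd hfe => ?_⟩
    obtain ⟨x, hx⟩ := hfe
    -- perturbation estimate
    have hpert : ∀ (i : ι), a i ≠ 0 → ∀ y' : Fin n → ℝ, (∀ m, |y' m - x₀' m| ≤ ε₁) →
        |(d i - g i ⬝ᵥ y')/a i - (d₀ i - g i ⬝ᵥ x₀')/a i| ≤ ε/2 := by
      intro i hi y' hy'
      rw [← sub_div, abs_div]
      have hgd : |g i ⬝ᵥ (y' - x₀')| ≤ SS i * ε₁ := by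
        refine abs_dot_le _ _ _ hε₁pos.le ?_
        intro m; simpa using hy' m
      have hnum : |d i - g i ⬝ᵥ y' - (d₀ i - g i ⬝ᵥ x₀')| ≤ δ + SS i * ε₁ := by
        have h1 : d i - g i ⬝ᵥ y' - (d₀ i - g i ⬝ᵥ x₀') = (d i - d₀ i) - g i ⬝ᵥ (y' - x₀') := by
          rw [dotProduct_sub]; ring
        rw [h1]
        calc |(d i - d₀ i) - g i ⬝ᵥ (y' - x₀')| ≤ |d i - d₀ i| + |g i ⬝ᵥ (y' - x₀')| :=
              abs_sub _ _
          _ ≤ δ + SS i * ε₁ := add_le_add (hd i) hgd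
      have hden : 0 < |a i| := abs_pos.mpr hi
      calc |d i - g i ⬝ᵥ y' - (d₀ i - g i ⬝ᵥ x₀')| / |a i| ≤ (δ + SS i * ε₁)/|a i| :=
            div_le_div_of_nonneg_right hnum hden.le
        _ ≤ ((1 + SS i) * (ε/(4*K)))/|a i| := by
            refine div_le_div_of_nonneg_right ?_ hden.le
            have h2 := mul_le_mul_of_nonneg_left hε₁le (hSS0 i)
            rw [show (1 + SS i) * (ε/(4*K)) = ε/(4*K) + SS i * (ε/(4*K)) from by ring]
            linarith
        _ = (1 + SS i)/|a i| * (ε/(4*K)) := by ring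
        _ ≤ K * (ε/(4*K)) := mul_le_mul_of_nonneg_right (hκK i hi) (by positivity)
        _ = ε/4 := by field_simp
        _ ≤ ε/2 := by linarith
    -- closeness of reduced right-hand sides
    have hdcl : ∀ i', |hvec d i' - hvec d₀ i'| ≤ δ₂ := by
      intro i'
      cases i' with
      | inl z => simpa [hvecdef] using (hd z.1).trans hδle2
      | inr pq =>
        obtain ⟨⟨p, hp⟩, ⟨q, hq⟩⟩ := pq
        have e : hvec d (Sum.inr (⟨p,hp⟩,⟨q,hq⟩)) - hvec d₀ (Sum.inr (⟨p,hp⟩,⟨q,hq⟩))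
            = (d p - d₀ p)/a p - (d q - d₀ q)/a q := by
          simp only [hvecdef, Sum.elim_inr]
          ring
        rw [e]
        have h1 : |(d p - d₀ p)/a p| ≤ δ * K := by
          rw [abs_div, div_eq_mul_inv, ← one_div]
          exact mul_le_mul (hd p) (hinvK p (ne_of_gt hp)) (by positivity) hδpos.le
        have h2 : |(d q - d₀ q)/a q| ≤ δ * K := by
          rw [abs_div, div_eq_mul_inv, ← one_div]
          exact mul_le_mul (hd q) (hinvK q (ne_of_lt hq)) (by positivity) hδpos.le
        have h3 : δ * (2*K) ≤ δ₂ := by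
          rw [← le_div_iff₀ (by positivity)]
          exact hδ2
        calc |(d p - d₀ p)/a p - (d q - d₀ q)/a q|
            ≤ |(d p - d₀ p)/a p| + |(d q - d₀ q)/a q| := abs_sub _ _
          _ ≤ δ₂ := by nlinarith
    -- apply the inductive hypothesis
    obtain ⟨y', hy'feas, hy'close⟩ := Hih (hvec d) hdcl
      ⟨(fun m => x (Fin.castSucc m)), hdown x d hx⟩
    -- choose the last coordinate
    set q2v : Option {i : ι // a i < 0} → ℝ := fun o =>
      o.elim (x₀ (Fin.last n) - ε/2) (fun q => (d q.1 - g q.1 ⬝ᵥ y')/a q.1) with hq2v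
    set t : ℝ := Finset.univ.sup' Finset.univ_nonempty q2v with htdef
    have ht_none : x₀ (Fin.last n) - ε/2 ≤ t :=
      Finset.le_sup' q2v (Finset.mem_univ none)
    have ht_N : ∀ q : {i : ι // a i < 0}, (d q.1 - g q.1 ⬝ᵥ y')/a q.1 ≤ t :=
      fun q => Finset.le_sup' q2v (Finset.mem_univ (some q))
    have ht_le : ∀ c : ℝ, (x₀ (Fin.last n) - ε/2 ≤ c) →
        (∀ q : {i : ι // a i < 0}, (d q.1 - g q.1 ⬝ᵥ y')/a q.1 ≤ c) → t ≤ c := by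
      intro c h1 h2
      refine Finset.sup'_le _ _ ?_
      rintro (_ | q) -
      · exact h1
      · exact h2 q
    have hLest : ∀ q : {i : ι // a i < 0},
        (d q.1 - g q.1 ⬝ᵥ y')/a q.1 ≤ x₀ (Fin.last n) + ε/2 := by
      rintro ⟨q, hq⟩
      have hp := hpert q (ne_of_lt hq) y' hy'close
      have hb := hLbase q hq
      have h2 := (abs_le.mp hp).2
      simp only at h2 hb ⊢
      linarith
    have hUest : ∀ p : {i : ι // 0 < a i},
        x₀ (Fin.last n) - ε/2 ≤ (d p.1 - g p.1 ⬝ᵥ y')/a p.1 := by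
      rintro ⟨p, hp0⟩
      have hp := hpert p (ne_of_gt hp0) y' hy'close
      have hb := hUbase p hp0
      have h2 := (abs_le.mp hp).1
      simp only at h2 hb ⊢
      linarith
    have ht_P : ∀ p : {i : ι // 0 < a i}, t ≤ (d p.1 - g p.1 ⬝ᵥ y')/a p.1 := by
      intro p
      refine ht_le _ (hUest p) ?_
      intro q
      have e : ((a p.1)⁻¹ • g p.1 - (a q.1)⁻¹ • g q.1) ⬝ᵥ y'
          ≤ d p.1/a p.1 - d q.1/a q.1 := hy'feas (Sum.inr (p, q))
      rw [sub_dotProduct, smul_dotProduct, smul_dotProduct, smul_eq_mul, smul_eq_mul,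
        inv_mul_eq_div, inv_mul_eq_div] at e
      rw [sub_div, sub_div]
      linarith
    have ht_close : |t - x₀ (Fin.last n)| ≤ ε := by
      rw [abs_le]
      refine ⟨by linarith [ht_none], ?_⟩
      have h5 : t ≤ x₀ (Fin.last n) + ε/2 := ht_le _ (by linarith) hLest
      linarith
    refine ⟨Fin.snoc y' t, hup y' t d ht_P ht_N ?_, ?_⟩
    · intro z
      have hf : g z.1 ⬝ᵥ y' ≤ d z.1 := hy'feas (Sum.inl z)
      exact hf
    · intro j
      refine Fin.lastCases ?_ ?_ j
      · rw [Fin.snoc_last]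
        exact ht_close
      · intro m
        rw [Fin.snoc_castSucc]
        exact (hy'close m).trans hε₁leε


lemma dot_symm {n : ℕ} {Q : Matrix (Fin n) (Fin n) ℝ} (hs : Q.IsHermitian)
    (x y : Fin n → ℝ) : x ⬝ᵥ Q *ᵥ y = y ⬝ᵥ Q *ᵥ x := by
  have h : ∀ i j, Q i j = Q j i := by
    intro i j
    conv_lhs => rw [← hs]
    simp [conjTranspose_apply]
  simp only [dotProduct, mulVec, Finset.mul_sum]
  rw [Finset.sum_comm]
  refine Finset.sum_congr rfl fun i _ => Finset.sum_congr rfl fun j _ => ?_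
  rw [h j i]; ring

lemma midpoint_ineq {n : ℕ} {Q : Matrix (Fin n) (Fin n) ℝ} (hs : Q.IsHermitian)
    (c s w : Fin n → ℝ)
    (hopt : (1/2) * (s ⬝ᵥ Q *ᵥ s) + c ⬝ᵥ s ≤
      (1/2) * (((1/2 : ℝ) • (s + w)) ⬝ᵥ Q *ᵥ ((1/2 : ℝ) • (s + w))) + c ⬝ᵥ ((1/2 : ℝ) • (s + w))) :
    (w - s) ⬝ᵥ Q *ᵥ (w - s) ≤
      4 * (((1/2) * (w ⬝ᵥ Q *ᵥ w) + c ⬝ᵥ w) - ((1/2) * (s ⬝ᵥ Q *ᵥ s) + c ⬝ᵥ s)) := by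
  have hsym := dot_symm hs s w
  simp only [smul_add, Matrix.mulVec_add, Matrix.mulVec_smul, dotProduct_add,
    add_dotProduct, dotProduct_smul, smul_dotProduct, smul_eq_mul,
    Matrix.mulVec_sub, sub_dotProduct, dotProduct_sub] at hopt ⊢
  linarith


lemma exists_mu {n : ℕ} {Q : Matrix (Fin n) (Fin n) ℝ} (hQ : Q.PosDef) :
    ∃ μ : ℝ, 0 < μ ∧ ∀ v : Fin n → ℝ, μ * (∑ i, v i ^ 2) ≤ v ⬝ᵥ Q *ᵥ v := by
  rcases Nat.eq_zero_or_pos n with hn | hn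
  · subst hn
    exact ⟨1, one_pos, fun v => by simp [dotProduct]⟩
  · set S : Set (Fin n → ℝ) := {v | ∑ i, v i ^ 2 = 1} with hS
    have hcont : Continuous fun v : Fin n → ℝ => ∑ i, v i ^ 2 :=
      continuous_finset_sum _ fun i _ => (continuous_apply i).pow 2
    have hQcont : Continuous fun v : Fin n → ℝ => v ⬝ᵥ Q *ᵥ v := by
      simp only [dotProduct, mulVec]
      exact continuous_finset_sum _ fun i _ => ((continuous_apply i).mul
        (continuous_finset_sum _ fun j _ => continuous_const.mul (continuous_apply j)))
    have hclosed : IsClosed S := isClosed_eq hcont continuous_const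
    have hbdd : Bornology.IsBounded S := by
      refine (Metric.isBounded_closedBall (x := (0 : Fin n → ℝ)) (r := 1)).subset ?_
      intro v hv
      rw [Metric.mem_closedBall, dist_zero_right]
      rw [pi_norm_le_iff_of_nonneg zero_le_one]
      intro i
      rw [Real.norm_eq_abs]
      refine abs_le_of_sq_le_sq ?_ zero_le_one
      rw [one_pow, ← hv]
      exact Finset.single_le_sum (fun j _ => sq_nonneg (v j)) (Finset.mem_univ i)
    have hcpt : IsCompact S := Metric.isCompact_of_isClosed_isBounded hclosed hbdd
    have hne : S.Nonempty := by
      refine ⟨Pi.single ⟨0, hn⟩ 1, ?_⟩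
      simp [hS, Pi.single_apply]
    obtain ⟨v₀, hv₀S, hmin⟩ := hcpt.exists_isMinOn hne hQcont.continuousOn
    have hv₀ne : v₀ ≠ 0 := by
      intro h
      rw [h] at hv₀S
      simp [hS] at hv₀S
    have hμpos : 0 < v₀ ⬝ᵥ Q *ᵥ v₀ := by simpa using hQ.dotProduct_mulVec_pos hv₀ne
    refine ⟨v₀ ⬝ᵥ Q *ᵥ v₀, hμpos, fun v => ?_⟩
    rcases eq_or_ne v 0 with rfl | hv
    · simp
    · have hEpos : 0 < ∑ i, v i ^ 2 := by
        obtain ⟨i, hi⟩ := Function.ne_iff.mp hv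
        refine Finset.sum_pos' (fun j _ => sq_nonneg _) ⟨i, Finset.mem_univ i, ?_⟩
        exact pow_two_pos_of_ne_zero hi
      set r : ℝ := Real.sqrt (∑ i, v i ^ 2) with hr
      have hrpos : 0 < r := Real.sqrt_pos.mpr hEpos
      have hr2 : r ^ 2 = ∑ i, v i ^ 2 := Real.sq_sqrt hEpos.le
      have huS : (r⁻¹ • v) ∈ S := by
        simp only [hS, Set.mem_setOf_eq, Pi.smul_apply, smul_eq_mul, mul_pow]
        rw [← Finset.mul_sum, ← hr2]
        field_simp
      have hle : (fun u => u ⬝ᵥ Q *ᵥ u) v₀ ≤ (fun u => u ⬝ᵥ Q *ᵥ u) (r⁻¹ • v) := hmin huS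
      simp only [] at hle
      have hexp : (r⁻¹ • v) ⬝ᵥ Q *ᵥ (r⁻¹ • v) = r⁻¹ * r⁻¹ * (v ⬝ᵥ Q *ᵥ v) := by
        simp [Matrix.mulVec_smul, smul_dotProduct, dotProduct_smul, smul_eq_mul]; ring
      rw [hexp] at hle
      have h2 : (v₀ ⬝ᵥ Q *ᵥ v₀) * (∑ i, v i ^ 2) ≤ v ⬝ᵥ Q *ᵥ v := by
        rw [← hr2]
        have := mul_le_mul_of_nonneg_left hle (le_of_lt (by positivity : (0:ℝ) < r ^ 2))
        calc (v₀ ⬝ᵥ Q *ᵥ v₀) * r ^ 2 = r ^ 2 * (v₀ ⬝ᵥ Q *ᵥ v₀) := by ring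
          _ ≤ r ^ 2 * (r⁻¹ * r⁻¹ * (v ⬝ᵥ Q *ᵥ v)) := this
          _ = v ⬝ᵥ Q *ᵥ v := by field_simp
      exact h2


lemma coercive_bound {n : ℕ} (Q : Matrix (Fin n) (Fin n) ℝ) (c : Fin n → ℝ)
    (μ M : ℝ) (hμ : 0 < μ)
    (hlow : ∀ x : Fin n → ℝ, μ * (∑ i, x i ^ 2) ≤ x ⬝ᵥ Q *ᵥ x) :
    ∃ R : ℝ, ∀ x : Fin n → ℝ,
      (1/2) * (x ⬝ᵥ Q *ᵥ x) + c ⬝ᵥ x ≤ M → ∀ i, |x i| ≤ R := by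
  set Cc : ℝ := ∑ i, |c i| with hCc
  have hCc0 : 0 ≤ Cc := Finset.sum_nonneg fun i _ => abs_nonneg _
  set s : ℝ := μ / (2 * (Cc + 1)) with hs
  have hspos : 0 < s := by positivity
  have hkey : s * (2 * (Cc + 1)) = μ := by rw [hs]; field_simp
  have hsCc : Cc * s / 2 ≤ μ / 4 := by nlinarith
  set E₀ : ℝ := (M + Cc * n / (2*s)) * (4/μ) with hE₀
  refine ⟨max 1 E₀, fun x hf i => ?_⟩
  set E : ℝ := ∑ j, x j ^ 2 with hE
  have hE0 : 0 ≤ E := Finset.sum_nonneg fun j _ => sq_nonneg _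
  -- bound on the linear part
  have h1 : -(c ⬝ᵥ x) ≤ ∑ j, |c j| * |x j| := by
    refine (neg_le_abs _).trans ?_
    refine (Finset.abs_sum_le_sum_abs _ _).trans ?_
    refine le_of_eq (Finset.sum_congr rfl fun j _ => abs_mul _ _)
  have h2 : ∀ j : Fin n, |c j| * |x j| ≤ Cc * ((s * x j ^ 2 + 1/s)/2) := by
    intro j
    have hcj : |c j| ≤ Cc := Finset.single_le_sum (fun m (_ : m ∈ Finset.univ) => abs_nonneg (c m)) (Finset.mem_univ j)
    have hinv : s * (1/s) = 1 := mul_one_div_cancel (ne_of_gt hspos)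
    have hamgm : |x j| ≤ (s * x j ^ 2 + 1/s)/2 := by
      have h2s : 2*s*|x j| ≤ s^2 * x j^2 + 1 := by
        nlinarith [sq_nonneg (s * |x j| - 1), sq_abs (x j)]
      rw [show s * x j ^ 2 + 1/s = (s^2 * x j^2 + 1)/s by field_simp,
        div_div, le_div_iff₀ (by positivity : (0:ℝ) < s * 2)]
      nlinarith [h2s]
    exact mul_le_mul hcj hamgm (abs_nonneg _) hCc0
  have h3 : -(c ⬝ᵥ x) ≤ Cc * ((s * E + n/s)/2) := by
    refine h1.trans ?_
    calc ∑ j, |c j| * |x j| ≤ ∑ j, Cc * ((s * x j ^ 2 + 1/s)/2) :=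
          Finset.sum_le_sum fun j _ => h2 j
      _ = Cc * ((s * E + n/s)/2) := by
          rw [← Finset.mul_sum]
          congr 1
          rw [← Finset.sum_div, Finset.sum_add_distrib, ← Finset.mul_sum]
          simp [hE]
          ring
  have h4 : μ * E ≤ x ⬝ᵥ Q *ᵥ x := hlow x
  -- combine
  have hEbound : E ≤ E₀ := by
    have key : (μ/4) * E ≤ M + Cc * n / (2*s) := by
      have hprod := mul_le_mul_of_nonneg_right hsCc hE0
      have hns : Cc * ((s * E + (n:ℝ)/s) / 2) = Cc * s / 2 * E + Cc * (n:ℝ) / (2*s) := by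
        field_simp
      nlinarith
    have h5 := mul_le_mul_of_nonneg_right key (by positivity : (0:ℝ) ≤ 4/μ)
    rw [hE₀]
    calc E = (μ/4*E)*(4/μ) := by field_simp
      _ ≤ _ := h5
  have hx2 : x i ^ 2 ≤ E :=
    Finset.single_le_sum (fun j (_ : j ∈ Finset.univ) => sq_nonneg (x j)) (Finset.mem_univ i)
  rcases le_or_gt (|x i|) 1 with h | h
  · exact h.trans (le_max_left _ _)
  · refine le_trans ?_ ((hEbound.trans (le_max_right 1 E₀)).trans_eq rfl)
    nlinarith [sq_abs (x i)]

lemma continuous_dot {N : ℕ} (v : Fin N → ℝ) :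
    Continuous fun x : Fin N → ℝ => v ⬝ᵥ x := by
  simp only [dotProduct]
  exact continuous_finset_sum _ fun i _ => continuous_const.mul (continuous_apply i)

lemma continuous_quad {N : ℕ} (Q : Matrix (Fin N) (Fin N) ℝ) :
    Continuous fun x : Fin N → ℝ => x ⬝ᵥ Q *ᵥ x := by
  simp only [dotProduct, mulVec]
  exact continuous_finset_sum _ fun i _ => (continuous_apply i).mul
    (continuous_finset_sum _ fun j _ => continuous_const.mul (continuous_apply j))

/-- Continuity of the optimal solution of the parametric QP
`min (1/2)xᵀQx + cᵀx s.t. Fx ≤ b + Eθ` with `Q` symmetric positive definite: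
if `xstar θ` is a (necessarily unique) global minimizer for every `θ` in the set
`Θ_feas` of parameters with nonempty feasible set, then `θ ↦ xstar θ` is continuous
on `Θ_feas`. -/
theorem stmt_6 {n k p : ℕ} (Q : Matrix (Fin n) (Fin n) ℝ) (hQ : Q.PosDef)
    (c : Fin n → ℝ) (F : Matrix (Fin k) (Fin n) ℝ) (b : Fin k → ℝ)
    (E : Matrix (Fin k) (Fin p) ℝ)
    (Θfeas : Set (Fin p → ℝ))
    (hΘfeas : Θfeas = {θ | ∃ x : Fin n → ℝ, F *ᵥ x ≤ b + E *ᵥ θ})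
    (xstar : (Fin p → ℝ) → (Fin n → ℝ))
    (hxstar : ∀ θ ∈ Θfeas,
      F *ᵥ xstar θ ≤ b + E *ᵥ θ ∧
      ∀ x : Fin n → ℝ, F *ᵥ x ≤ b + E *ᵥ θ →
        (1 / 2) * (xstar θ ⬝ᵥ (Q *ᵥ xstar θ)) + c ⬝ᵥ xstar θ ≤
          (1 / 2) * (x ⬝ᵥ (Q *ᵥ x)) + c ⬝ᵥ x) :
    ContinuousOn xstar Θfeas := by
  subst hΘfeas
  set f : (Fin n → ℝ) → ℝ := fun x => (1/2) * (x ⬝ᵥ Q *ᵥ x) + c ⬝ᵥ x with hfdef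
  have hfc : Continuous f := (continuous_const.mul (continuous_quad Q)).add (continuous_dot c)
  obtain ⟨μ, hμpos, hμ⟩ := exists_mu hQ
  intro θ₀ hθ₀
  rw [Metric.continuousWithinAt_iff]
  by_contra hcon
  push_neg at hcon
  obtain ⟨ε, hεpos, hbad⟩ := hcon
  set x₀ : Fin n → ℝ := xstar θ₀ with hx₀def
  set d₀ : Fin k → ℝ := fun i => b i + (E *ᵥ θ₀) i with hd₀def
  have hx₀feas : ∀ i, F i ⬝ᵥ x₀ ≤ d₀ i := fun i => (hxstar θ₀ hθ₀).1 i
  have hopt₀ : ∀ x : Fin n → ℝ, (∀ i, F i ⬝ᵥ x ≤ d₀ i) → f x₀ ≤ f x := by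
    intro x hx
    exact (hxstar θ₀ hθ₀).2 x (fun i => hx i)
  -- a Lipschitz-type constant for `θ ↦ b + Eθ`
  set L : ℝ := 1 + ∑ i, ∑ m, |E i m| with hLdef
  have hL1 : 1 ≤ L := by
    rw [hLdef]
    have : (0:ℝ) ≤ ∑ i, ∑ m, |E i m| :=
      Finset.sum_nonneg fun i _ => Finset.sum_nonneg fun m _ => abs_nonneg _
    linarith
  have hLpos : 0 < L := lt_of_lt_of_le one_pos hL1
  have hrowL : ∀ i : Fin k, (∑ m, |E i m|) ≤ L := by
    intro i
    have h1 : (∑ m, |E i m|) ≤ ∑ i, ∑ m, |E i m| :=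
      Finset.single_le_sum (fun i2 (_ : i2 ∈ univ) =>
        Finset.sum_nonneg fun m _ => abs_nonneg (E i2 m)) (mem_univ i)
    rw [hLdef]; linarith
  have hEdist : ∀ (θ : Fin p → ℝ) (i : Fin k),
      |(b i + (E *ᵥ θ) i) - d₀ i| ≤ (∑ m, |E i m|) * dist θ θ₀ := by
    intro θ i
    have h1 : (b i + (E *ᵥ θ) i) - d₀ i = E i ⬝ᵥ (θ - θ₀) := by
      simp only [hd₀def]
      show b i + E i ⬝ᵥ θ - (b i + E i ⬝ᵥ θ₀) = _
      rw [dotProduct_sub]; ring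
    rw [h1]
    refine abs_dot_le _ _ _ dist_nonneg ?_
    intro m
    have := dist_le_pi_dist θ θ₀ m
    rw [Real.dist_eq] at this
    simpa using this
  -- Claim A: values near the optimum
  have claimA : ∀ η : ℝ, 0 < η → ∃ δA : ℝ, 0 < δA ∧
      ∀ θ : Fin p → ℝ, (∃ x : Fin n → ℝ, F *ᵥ x ≤ b + E *ᵥ θ) → dist θ θ₀ < δA →
        f (xstar θ) ≤ f x₀ + η := by
    intro η hη
    have hca : ContinuousAt f x₀ := hfc.continuousAt
    obtain ⟨ρ, hρpos, hρ⟩ := Metric.continuousAt_iff.mp hca η hη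
    obtain ⟨δL, hδLpos, hδL⟩ :=
      lsc_aux n (Fin k) inferInstance (fun i => F i) x₀ d₀ hx₀feas (ρ/2) (by positivity)
    refine ⟨δL / L, by positivity, fun θ hθ hdist => ?_⟩
    set dθ : Fin k → ℝ := fun i => b i + (E *ᵥ θ) i with hdθdef
    have hclose : ∀ i, |dθ i - d₀ i| ≤ δL := by
      intro i
      refine (hEdist θ i).trans ?_
      calc (∑ m, |E i m|) * dist θ θ₀ ≤ L * (δL / L) :=
            mul_le_mul (hrowL i) hdist.le dist_nonneg hLpos.le
        _ = δL := by field_simp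
    obtain ⟨y, hyfeas, hyclose⟩ := hδL dθ hclose
      ⟨xstar θ, fun i => (hxstar θ hθ).1 i⟩
    have hydist : dist y x₀ < ρ := by
      have : dist y x₀ ≤ ρ/2 := by
        rw [dist_pi_le_iff (by positivity)]
        intro j
        rw [Real.dist_eq]
        exact hyclose j
      linarith
    have h1 : f (xstar θ) ≤ f y := (hxstar θ hθ).2 y (fun i => hyfeas i)
    have h2 : f y ≤ f x₀ + η := by
      have := hρ hydist
      rw [Real.dist_eq] at this
      have := (abs_lt.mp this).2
      linarith
    linarith
  -- build the bad sequence
  obtain ⟨δA1, hδA1pos, hA1⟩ := claimA 1 one_pos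
  have hseq : ∀ j : ℕ, ∃ θ : Fin p → ℝ, (∃ x : Fin n → ℝ, F *ᵥ x ≤ b + E *ᵥ θ) ∧
      dist θ θ₀ < min δA1 (1/(j+1)) ∧ ε ≤ dist (xstar θ) x₀ := by
    intro j
    have hpos : 0 < min δA1 (1/((j:ℝ)+1)) := lt_min hδA1pos (by positivity)
    obtain ⟨θ, hθmem, hθd, hθb⟩ := hbad _ hpos
    exact ⟨θ, hθmem, hθd, hθb⟩
  choose θs hθsmem hθsdist hθsbad using hseq
  set xs : ℕ → (Fin n → ℝ) := fun j => xstar (θs j) with hxsdef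
  have hθstend : Filter.Tendsto θs Filter.atTop (nhds θ₀) := by
    rw [tendsto_iff_dist_tendsto_zero]
    refine squeeze_zero (fun j => dist_nonneg) (fun j => ?_) tendsto_one_div_add_atTop_nhds_zero_nat
    exact ((hθsdist j).trans_le (min_le_right _ _)).le
  -- boundedness and subsequence extraction
  have hfbound : ∀ j, f (xs j) ≤ f x₀ + 1 := by
    intro j
    exact hA1 (θs j) (hθsmem j) ((hθsdist j).trans_le (min_le_left _ _))
  obtain ⟨R, hR⟩ := coercive_bound Q c μ (f x₀ + 1) hμpos hμ
  set R' : ℝ := max R 0 with hR'def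
  have hmem : ∀ j, xs j ∈ Metric.closedBall (0 : Fin n → ℝ) R' := by
    intro j
    rw [Metric.mem_closedBall, dist_zero_right]
    rw [pi_norm_le_iff_of_nonneg (le_max_right R 0)]
    intro i
    rw [Real.norm_eq_abs]
    exact (hR (xs j) (hfbound j) i).trans (le_max_left R 0)
  obtain ⟨xb, hxbmem, φ, hφmono, hφtend⟩ :=
    (isCompact_closedBall (0 : Fin n → ℝ) R').tendsto_subseq hmem
  have hθφtend : Filter.Tendsto (fun j => θs (φ j)) Filter.atTop (nhds θ₀) :=
    hθstend.comp hφmono.tendsto_atTop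
  -- the limit is feasible for θ₀
  have hxbfeas : ∀ i, F i ⬝ᵥ xb ≤ d₀ i := by
    intro i
    have h1 : Filter.Tendsto (fun j => F i ⬝ᵥ (xs (φ j))) Filter.atTop (nhds (F i ⬝ᵥ xb)) :=
      ((continuous_dot (F i)).tendsto xb).comp hφtend
    have h2 : Filter.Tendsto (fun j => b i + (E *ᵥ θs (φ j)) i) Filter.atTop (nhds (d₀ i)) := by
      have hc : Continuous fun θ : Fin p → ℝ => b i + E i ⬝ᵥ θ :=
        continuous_const.add (continuous_dot (E i))
      exact (hc.tendsto θ₀).comp hθφtend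
    exact le_of_tendsto_of_tendsto' h1 h2 (fun j => (hxstar (θs (φ j)) (hθsmem (φ j))).1 i)
  -- value at the limit
  have hfxbtend : Filter.Tendsto (fun j => f (xs (φ j))) Filter.atTop (nhds (f xb)) :=
    (hfc.tendsto xb).comp hφtend
  have hle : f xb ≤ f x₀ := by
    refine le_of_forall_pos_le_add ?_
    intro η hη
    obtain ⟨δA, hδApos, hA⟩ := claimA η hη
    have hev : ∀ᶠ j in Filter.atTop, dist (θs (φ j)) θ₀ < δA := by
      have := hθφtend (Metric.ball_mem_nhds θ₀ hδApos)
      simpa [Metric.mem_ball] using this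
    refine le_of_tendsto hfxbtend ?_
    filter_upwards [hev] with j hj
    exact hA (θs (φ j)) (hθsmem (φ j)) hj
  have hge : f x₀ ≤ f xb := hopt₀ xb hxbfeas
  -- midpoint argument forces xb = x₀
  have hmfeas : ∀ i, F i ⬝ᵥ ((1/2 : ℝ) • (x₀ + xb)) ≤ d₀ i := by
    intro i
    have he : F i ⬝ᵥ ((1/2 : ℝ) • (x₀ + xb)) = (1/2) * (F i ⬝ᵥ x₀) + (1/2) * (F i ⬝ᵥ xb) := by
      rw [dotProduct_smul, dotProduct_add, smul_eq_mul]
      ring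
    rw [he]
    have h1 := hx₀feas i
    have h2 := hxbfeas i
    set u : ℝ := F i ⬝ᵥ x₀
    set v : ℝ := F i ⬝ᵥ xb
    set w : ℝ := d₀ i
    calc (1/2) * u + (1/2) * v ≤ (1/2)*w + (1/2)*w :=
          add_le_add (mul_le_mul_of_nonneg_left h1 one_half_pos.le)
            (mul_le_mul_of_nonneg_left h2 one_half_pos.le)
      _ = w := by ring
  have hmid := midpoint_ineq hQ.1 c x₀ xb (hopt₀ _ hmfeas)
  have hff : f xb = f x₀ := le_antisymm hle hge
  have hmid' : (xb - x₀) ⬝ᵥ Q *ᵥ (xb - x₀) ≤ 4 * (f xb - f x₀) := hmid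
  rw [hff, sub_self, mul_zero] at hmid'
  have h5 : μ * (∑ i, ((xb - x₀) i)^2) ≤ 0 := (hμ (xb - x₀)).trans hmid'
  have h6 : (∑ i, ((xb - x₀) i)^2) ≤ 0 := by
    by_contra h
    push_neg at h
    exact absurd h5 (not_le.mpr (mul_pos hμpos h))
  have hsum0 : ∑ i, ((xb - x₀) i)^2 = 0 :=
    le_antisymm h6 (Finset.sum_nonneg fun i _ => sq_nonneg _)
  have hxx : xb = x₀ := by
    funext i
    have hz := (Finset.sum_eq_zero_iff_of_nonneg
      (fun i (_ : i ∈ univ) => sq_nonneg ((xb - x₀) i))).mp hsum0 i (mem_univ i)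
    have hz2 : (xb - x₀) i = 0 := sq_eq_zero_iff.mp hz
    have hz3 : xb i - x₀ i = 0 := hz2
    exact sub_eq_zero.mp hz3
  -- final contradiction
  have hevdist : ∀ᶠ j in Filter.atTop, dist (xs (φ j)) x₀ < ε := by
    rw [hxx] at hφtend
    have := hφtend (Metric.ball_mem_nhds x₀ hεpos)
    simpa [Metric.mem_ball] using this
  obtain ⟨j, hj⟩ := hevdist.exists
  exact absurd hj (not_lt.mpr (hθsbad (φ j)))
end

section
/- Let κ > 0, ρ > 0, and let V ∈ ℝ^{p×p} be symmetric with spectral decomposition V = U Γ Uᵀ, where U is orthogonal and Γ = diag(γ₁, …, γ_p). Then the function B ↦ −κ log det B + (ρ/2)‖B − V‖_F², over symmetric positive definite p×p matrices B, has a unique global minimizer B* = U Γ* Uᵀ, where Γ* = diag(γ*₁, …, γ*_p) with γ*ᵢ = (γᵢ + √(γᵢ² + 4κ/ρ))/2. In matrix form, B* = (1/2) U (Γ + (Γ² + (4κ/ρ) I)^{1/2}) Uᵀ. -/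
open Matrix

-- congruence preserves PosDef over ℝ when W has a left inverse for Wᵀ
lemma aux_posDef_conj {p : ℕ} {W A : Matrix (Fin p) (Fin p) ℝ} (hA : A.PosDef)
    (hW : ∃ T, T * Wᵀ = 1) : (W * A * Wᵀ).PosDef := by
  obtain ⟨T, hT⟩ := hW
  refine Matrix.PosDef.of_dotProduct_mulVec_pos ?_ ?_
  · have hAs : Aᵀ = A := by
      have := hA.isHermitian
      rwa [Matrix.IsHermitian, Matrix.conjTranspose_eq_transpose_of_trivial] at this
    rw [Matrix.IsHermitian, Matrix.conjTranspose_eq_transpose_of_trivial]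
    rw [Matrix.transpose_mul, Matrix.transpose_mul, Matrix.transpose_transpose, hAs,
      Matrix.mul_assoc]
  · intro x hx
    have hy0 : Wᵀ *ᵥ x ≠ 0 := by
      intro h
      have : T *ᵥ (Wᵀ *ᵥ x) = 0 := by rw [h, Matrix.mulVec_zero]
      rw [Matrix.mulVec_mulVec, hT, Matrix.one_mulVec] at this
      exact hx this
    have hpos := hA.dotProduct_mulVec_pos hy0
    have heq : star x ⬝ᵥ ((W * A * Wᵀ) *ᵥ x)
        = star (Wᵀ *ᵥ x) ⬝ᵥ (A *ᵥ (Wᵀ *ᵥ x)) := by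
      rw [star_trivial, star_trivial, ← Matrix.mulVec_mulVec, ← Matrix.mulVec_mulVec,
        Matrix.dotProduct_mulVec x W, ← Matrix.mulVec_transpose]
    rw [heq]
    exact hpos

lemma aux_logdet_le_trace {p : ℕ} {M : Matrix (Fin p) (Fin p) ℝ} (hM : M.PosDef) :
    Real.log M.det ≤ M.trace - p := by
  have hH := hM.isHermitian
  have hev := hM.eigenvalues_pos
  have hdet : M.det = ∏ i, hH.eigenvalues i := by simpa using hH.det_eq_prod_eigenvalues
  have htr : M.trace = ∑ i, hH.eigenvalues i := by
    simpa using hH.trace_eq_sum_eigenvalues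
  rw [hdet, htr, Real.log_prod (fun i _ => (hev i).ne')]
  calc ∑ i, Real.log (hH.eigenvalues i)
      ≤ ∑ i, (hH.eigenvalues i - 1) :=
        Finset.sum_le_sum fun i _ => Real.log_le_sub_one_of_pos (hev i)
    _ = (∑ i, hH.eigenvalues i) - p := by
        rw [Finset.sum_sub_distrib]
        simp

lemma aux_sum_mul_eq_trace {p : ℕ} (X Y : Matrix (Fin p) (Fin p) ℝ) (hX : Xᵀ = X) :
    ∑ i, ∑ j, X i j * Y i j = (X * Y).trace := by
  have hXe : ∀ i j, X i j = X j i := fun i j => (congrFun (congrFun hX i) j).symm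
  rw [Matrix.trace]
  simp only [Matrix.diag, Matrix.mul_apply]
  rw [Finset.sum_comm]
  exact Finset.sum_congr rfl fun j _ => Finset.sum_congr rfl fun i _ => by rw [hXe i j]


/-- Log-determinant proximal step: for `κ, ρ > 0` and a symmetric `V = UΓUᵀ` with `U`
orthogonal and `Γ = diag(γ)`, the function `B ↦ −κ log det B + (ρ/2)‖B − V‖_F²` over
symmetric positive definite matrices has the unique global minimizer
`B* = UΓ*Uᵀ` with `Γ* = diag((γᵢ + √(γᵢ² + 4κ/ρ))/2)`. -/
theorem stmt_15 {p : ℕ} (κ ρ : ℝ) (hκ : 0 < κ) (hρ : 0 < ρ)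
    (V U : Matrix (Fin p) (Fin p) ℝ) (γ : Fin p → ℝ)
    (hVsymm : V.IsSymm)
    (hU : U * Uᵀ = 1 ∧ Uᵀ * U = 1)
    (hV : V = U * Matrix.diagonal γ * Uᵀ)
    (f : Matrix (Fin p) (Fin p) ℝ → ℝ)
    (hf : ∀ B, f B = -κ * Real.log B.det
      + (ρ / 2) * (∑ i, ∑ j, (B i j - V i j) ^ 2))
    (Bstar : Matrix (Fin p) (Fin p) ℝ)
    (hBstar : Bstar =
      U * Matrix.diagonal (fun i => (γ i + Real.sqrt ((γ i) ^ 2 + 4 * κ / ρ)) / 2) * Uᵀ) :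
    Bstar.PosDef ∧
    ∀ B : Matrix (Fin p) (Fin p) ℝ, B.IsSymm → B.PosDef → B ≠ Bstar →
      f Bstar < f B := by
  obtain ⟨hU1, hU2⟩ := hU
  set g : Fin p → ℝ := fun i => (γ i + Real.sqrt ((γ i) ^ 2 + 4 * κ / ρ)) / 2 with hgdef
  have hBstar' : Bstar = U * Matrix.diagonal g * Uᵀ := hBstar
  -- scalar facts
  have hs2 : ∀ i, Real.sqrt ((γ i) ^ 2 + 4 * κ / ρ) ^ 2 = (γ i) ^ 2 + 4 * κ / ρ :=
    fun i => Real.sq_sqrt (by positivity)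
  have hgpos : ∀ i, 0 < g i := by
    intro i
    have h1 := hs2 i
    have h2 := Real.sqrt_nonneg ((γ i) ^ 2 + 4 * κ / ρ)
    have h3 : 0 < 4 * κ / ρ := by positivity
    have h4 : (0:ℝ) < 2 := by norm_num
    rw [hgdef]
    have : 0 < γ i + Real.sqrt ((γ i) ^ 2 + 4 * κ / ρ) := by nlinarith
    positivity
  have hkey : ∀ i, ρ * (g i * (g i - γ i)) = κ := by
    intro i
    have h1 := hs2 i
    have : g i * (g i - γ i) = (Real.sqrt ((γ i) ^ 2 + 4 * κ / ρ) ^ 2 - (γ i) ^ 2) / 4 := by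
      rw [hgdef]; ring
    rw [this, h1]
    field_simp
    ring
  have hginv : ∀ i, ρ * (g i - γ i) = κ * (g i)⁻¹ := by
    intro i
    have h0 := (hgpos i).ne'
    field_simp
    linear_combination hkey i
  -- matrix algebra toolbox
  have hconj : ∀ a b : Fin p → ℝ,
      (U * Matrix.diagonal a * Uᵀ) * (U * Matrix.diagonal b * Uᵀ)
        = U * Matrix.diagonal (fun i => a i * b i) * Uᵀ := by
    intro a b
    have h2 : ∀ X : Matrix (Fin p) (Fin p) ℝ, Uᵀ * (U * X) = X := fun X => by
      rw [← Matrix.mul_assoc, hU2, Matrix.one_mul]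
    simp only [Matrix.mul_assoc]
    rw [h2, ← Matrix.mul_assoc (Matrix.diagonal a), Matrix.diagonal_mul_diagonal]
  have hsymm : ∀ a : Fin p → ℝ, (U * Matrix.diagonal a * Uᵀ)ᵀ = U * Matrix.diagonal a * Uᵀ := by
    intro a
    rw [Matrix.transpose_mul, Matrix.transpose_mul, Matrix.transpose_transpose,
      Matrix.diagonal_transpose, Matrix.mul_assoc]
  set Binv : Matrix (Fin p) (Fin p) ℝ := U * Matrix.diagonal (fun i => (g i)⁻¹) * Uᵀ with hBinv
  have hBB' : Binv * Bstar = 1 := by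
    rw [hBstar', hBinv, hconj]
    have : (fun i => (g i)⁻¹ * g i) = fun _ => (1:ℝ) :=
      funext fun i => inv_mul_cancel₀ (hgpos i).ne'
    rw [this, Matrix.diagonal_one, Matrix.mul_one, hU1]
  -- PosDef of Bstar
  have hBpd : Bstar.PosDef := by
    rw [hBstar']
    exact aux_posDef_conj (Matrix.PosDef.diagonal hgpos) ⟨U, hU1⟩
  refine ⟨hBpd, fun B hBsymmB hBpdB hne => ?_⟩
  -- gradient condition, entrywise
  have hentry : ∀ (d : Fin p → ℝ) i j,
      (U * Matrix.diagonal d * Uᵀ) i j = ∑ k, U i k * d k * U j k := by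
    intro d i j
    conv_lhs => rw [Matrix.mul_apply]
    simp only [Matrix.mul_diagonal, Matrix.transpose_apply]
  have hBV : Bstar - V = U * Matrix.diagonal (fun i => g i - γ i) * Uᵀ := by
    rw [hBstar', hV, ← Matrix.sub_mul, ← Matrix.mul_sub, Matrix.diagonal_sub]
  have hgradE : ∀ i j, ρ * ((Bstar - V) i j) = κ * Binv i j := by
    intro i j
    rw [hBV, hBinv, hentry, hentry, Finset.mul_sum, Finset.mul_sum]
    exact Finset.sum_congr rfl fun k _ => by linear_combination (U i k * U j k) * hginv k
  -- square-root congruence matrix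
  set t : Fin p → ℝ := fun i => (Real.sqrt (g i))⁻¹ with htdef
  set S : Matrix (Fin p) (Fin p) ℝ := U * Matrix.diagonal t * Uᵀ with hSdef
  have htt : (fun i => t i * t i) = fun i => (g i)⁻¹ := funext fun i => by
    rw [htdef, ← mul_inv, Real.mul_self_sqrt (hgpos i).le]
  have hSS : S * S = Binv := by rw [hSdef, hconj, htt, hBinv]
  have hSs : Sᵀ = S := hsymm t
  have hMpd : (S * B * S).PosDef := by
    have hT : ∃ T', T' * Sᵀ = 1 := by
      refine ⟨U * Matrix.diagonal (fun i => Real.sqrt (g i)) * Uᵀ, ?_⟩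
      rw [hSs, hSdef, hconj]
      have h1 : (fun i => Real.sqrt (g i) * t i) = fun _ => (1:ℝ) := funext fun i => by
        rw [htdef]; exact mul_inv_cancel₀ (Real.sqrt_pos.mpr (hgpos i)).ne'
      rw [h1, Matrix.diagonal_one, Matrix.mul_one, hU1]
    have h2 := aux_posDef_conj hBpdB hT
    rwa [hSs] at h2
  -- determinant and trace facts
  have hdetBs : 0 < Bstar.det := hBpd.det_pos
  have hdetB : 0 < B.det := hBpdB.det_pos
  have hdetMul : Binv.det * Bstar.det = 1 := by rw [← Matrix.det_mul, hBB', Matrix.det_one]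
  have hdetBinv : Binv.det = (Bstar.det)⁻¹ := eq_inv_of_mul_eq_one_left hdetMul
  have hMdet : (S * B * S).det = B.det * Binv.det := by
    have h1 : (S * B * S).det = S.det * B.det * S.det := by
      rw [Matrix.det_mul, Matrix.det_mul]
    have h2 : Binv.det = S.det * S.det := by
      rw [← hSS, Matrix.det_mul]
    rw [h1, h2]; ring
  have hMtr : (S * B * S).trace = (Binv * B).trace := by
    rw [Matrix.trace_mul_cycle, hSS]
  have hlog := aux_logdet_le_trace hMpd
  rw [hMdet, hMtr] at hlog
  have hlogM : Real.log (B.det * Binv.det) = Real.log B.det - Real.log Bstar.det := by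
    rw [hdetBinv, Real.log_mul hdetB.ne' (inv_ne_zero hdetBs.ne'), Real.log_inv]; ring
  rw [hlogM] at hlog
  -- cross term identity
  have hBsS : Bstarᵀ = Bstar := by rw [hBstar']; exact hsymm g
  have hEs : (Bstar - V)ᵀ = Bstar - V := by rw [Matrix.transpose_sub, hBsS, hVsymm]
  have hBis : Binvᵀ = Binv := by rw [hBinv]; exact hsymm _
  have hcross : ρ * (∑ i, ∑ j, (Bstar - V) i j * (B - Bstar) i j)
      = κ * ((Binv * B).trace - p) := by
    have e1 : ρ * (∑ i, ∑ j, (Bstar - V) i j * (B - Bstar) i j)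
        = ∑ i, ∑ j, (κ * Binv i j) * (B - Bstar) i j := by
      rw [Finset.mul_sum]
      refine Finset.sum_congr rfl fun i _ => ?_
      rw [Finset.mul_sum]
      refine Finset.sum_congr rfl fun j _ => ?_
      rw [← mul_assoc, hgradE]
    have e2 : ∑ i, ∑ j, (κ * Binv i j) * (B - Bstar) i j
        = κ * ∑ i, ∑ j, Binv i j * (B - Bstar) i j := by
      simp [Finset.mul_sum, mul_assoc]
    rw [e1, e2, aux_sum_mul_eq_trace _ _ hBis, Matrix.mul_sub, Matrix.trace_sub, hBB',
      Matrix.trace_one]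
    simp
  -- quadratic expansion
  have hsum : ∑ i, ∑ j, (B i j - V i j) ^ 2
      = (∑ i, ∑ j, (Bstar i j - V i j) ^ 2)
        + 2 * (∑ i, ∑ j, (Bstar - V) i j * (B - Bstar) i j)
        + ∑ i, ∑ j, (B i j - Bstar i j) ^ 2 := by
    have h : ∀ i j, (B i j - V i j) ^ 2
        = (Bstar i j - V i j) ^ 2
          + 2 * ((Bstar - V) i j * (B - Bstar) i j)
          + (B i j - Bstar i j) ^ 2 := by
      intro i j
      simp only [Matrix.sub_apply]
      ring
    simp only [h, Finset.sum_add_distrib, Finset.mul_sum]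
  -- positivity of the strict term
  have hDne : ∃ i j, B i j ≠ Bstar i j := by
    by_contra h
    push_neg at h
    exact hne (Matrix.ext h)
  obtain ⟨i0, j0, hij⟩ := hDne
  have hsq : 0 < ∑ i, ∑ j, (B i j - Bstar i j) ^ 2 := by
    have h0 : B i0 j0 - Bstar i0 j0 ≠ 0 := sub_ne_zero.mpr hij
    have hterm : 0 < (B i0 j0 - Bstar i0 j0) ^ 2 :=
      lt_of_le_of_ne (sq_nonneg _) (Ne.symm (pow_ne_zero 2 h0))
    refine Finset.sum_pos' (fun i _ => Finset.sum_nonneg fun j _ => sq_nonneg _)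
      ⟨i0, Finset.mem_univ _, ?_⟩
    exact Finset.sum_pos' (fun j _ => sq_nonneg _) ⟨j0, Finset.mem_univ _, hterm⟩
  -- assemble
  rw [hf B, hf Bstar, hsum]
  have hLip : κ * (Real.log B.det - Real.log Bstar.det) ≤ κ * ((Binv * B).trace - p) :=
    mul_le_mul_of_nonneg_left hlog hκ.le
  nlinarith [hcross, hsq, hLip, hρ, mul_pos hρ hsq]
end

section
/- Let Π ∈ ℝ^{p×T}, C₁, C₂ ∈ ℝ^{p×p}, C₃ ∈ ℝ^{p×T}, G ∈ ℝ^{p×p}, and ρ, κ > 0. Then the matrix 2I + ΠΠᵀ ∈ ℝ^{p×p} is symmetric positive definite (hence invertible), and the function f(X) = (ρ/2)(‖X − C₁‖_F² + ‖X − C₂‖_F² + ‖XΠ − C₃‖_F²) + κ·tr(XG) over X ∈ ℝ^{p×p} has the unique global minimizer X* = (C₁ + C₂ + C₃Πᵀ − (κ/ρ)Gᵀ)(2I + ΠΠᵀ)⁻¹. -/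
open Matrix

private lemma sum_mul_eq_trace {m n : ℕ} (A B : Matrix (Fin m) (Fin n) ℝ) :
    ∑ i, ∑ j, A i j * B i j = Matrix.trace (A * Bᵀ) := by
  simp [Matrix.trace, Matrix.mul_apply, Matrix.diag]

private lemma expand_sq {m n : ℕ} (A B : Matrix (Fin m) (Fin n) ℝ) :
    ∑ i, ∑ j, (A i j + B i j) ^ 2
      = (∑ i, ∑ j, A i j ^ 2) + 2 * Matrix.trace (A * Bᵀ) + ∑ i, ∑ j, B i j ^ 2 := by
  rw [← sum_mul_eq_trace, Finset.mul_sum]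
  simp_rw [Finset.mul_sum]
  rw [← Finset.sum_add_distrib, ← Finset.sum_add_distrib]
  refine Finset.sum_congr rfl fun i _ => ?_
  rw [← Finset.sum_add_distrib, ← Finset.sum_add_distrib]
  exact Finset.sum_congr rfl fun j _ => by ring

/-- The B⁽¹⁾-update of the ADMM topology-recovery algorithm: `2I + PmatPmatᵀ` is symmetric
positive definite, and the function
`f(X) = (ρ/2)(‖X − C₁‖_F² + ‖X − C₂‖_F² + ‖XPmat − C₃‖_F²) + κ·tr(XG)` has the unique
global minimizer `X* = (C₁ + C₂ + C₃Pmatᵀ − (κ/ρ)Gᵀ)(2I + PmatPmatᵀ)⁻¹`. -/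
theorem stmt_16 {p T : ℕ} (Pmat : Matrix (Fin p) (Fin T) ℝ)
    (C₁ C₂ G : Matrix (Fin p) (Fin p) ℝ) (C₃ : Matrix (Fin p) (Fin T) ℝ)
    (ρ κ : ℝ) (hρ : 0 < ρ) (hκ : 0 < κ)
    (f : Matrix (Fin p) (Fin p) ℝ → ℝ)
    (hf : ∀ X, f X = (ρ / 2) * ((∑ i, ∑ j, (X i j - C₁ i j) ^ 2)
        + (∑ i, ∑ j, (X i j - C₂ i j) ^ 2)
        + (∑ i, ∑ j, ((X * Pmat) i j - C₃ i j) ^ 2))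
      + κ * Matrix.trace (X * G))
    (Xstar : Matrix (Fin p) (Fin p) ℝ)
    (hXstar : Xstar = (C₁ + C₂ + C₃ * Pmatᵀ - (κ / ρ) • Gᵀ)
      * ((2 : ℝ) • (1 : Matrix (Fin p) (Fin p) ℝ) + Pmat * Pmatᵀ)⁻¹) :
    ((2 : ℝ) • (1 : Matrix (Fin p) (Fin p) ℝ) + Pmat * Pmatᵀ).PosDef ∧
    ∀ X : Matrix (Fin p) (Fin p) ℝ, X ≠ Xstar → f Xstar < f X := by
  set A : Matrix (Fin p) (Fin p) ℝ := (2 : ℝ) • (1 : Matrix (Fin p) (Fin p) ℝ) + Pmat * Pmatᵀ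
    with hAdef
  have h2 : ((2 : ℝ) • (1 : Matrix (Fin p) (Fin p) ℝ)) = (2 : Matrix (Fin p) (Fin p) ℝ) := by
    rw [← Algebra.algebraMap_eq_smul_one]
    simp [map_ofNat]
  have hPS : (Pmat * Pmatᵀ).PosSemidef := by
    have := Matrix.posSemidef_self_mul_conjTranspose Pmat
    simpa [Matrix.conjTranspose_eq_transpose_of_trivial] using this
  have hA : A.PosDef := by
    rw [hAdef, h2]
    exact Matrix.PosDef.add_posSemidef (Matrix.PosDef.ofNat 2) hPS
  have hdet : IsUnit A.det := hA.det_pos.ne'.isUnit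
  have hstat : Xstar * A = C₁ + C₂ + C₃ * Pmatᵀ - (κ / ρ) • Gᵀ := by
    rw [hXstar, mul_assoc, Matrix.nonsing_inv_mul A hdet, mul_one]
  have hXA : Xstar * A = (2 : ℝ) • Xstar + Xstar * (Pmat * Pmatᵀ) := by
    rw [hAdef, mul_add, Matrix.mul_smul, mul_one]
  have h2' : ρ • ((2 : ℝ) • Xstar + Xstar * (Pmat * Pmatᵀ))
      = ρ • (C₁ + C₂ + C₃ * Pmatᵀ) - κ • Gᵀ := by
    rw [← hXA, hstat, smul_sub, smul_smul, mul_div_cancel₀ _ hρ.ne']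
  have hM : ρ • (Xstar - C₁) + ρ • (Xstar - C₂) + ρ • ((Xstar * Pmat - C₃) * Pmatᵀ) + κ • Gᵀ
      = 0 := by
    rw [Matrix.sub_mul, Matrix.mul_assoc]
    linear_combination (norm := module) h2'
  have hcross : ∀ Y : Matrix (Fin p) (Fin p) ℝ,
      ρ * Matrix.trace (Y * (Xstar - C₁)ᵀ) + ρ * Matrix.trace (Y * (Xstar - C₂)ᵀ)
      + ρ * Matrix.trace ((Y * Pmat) * (Xstar * Pmat - C₃)ᵀ)
      + κ * Matrix.trace (Y * G) = 0 := by
    intro Y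
    have : Matrix.trace (Y * (ρ • (Xstar - C₁) + ρ • (Xstar - C₂)
        + ρ • ((Xstar * Pmat - C₃) * Pmatᵀ) + κ • Gᵀ)ᵀ) = 0 := by
      rw [hM]; simp
    simp only [transpose_add, transpose_smul, transpose_mul, transpose_transpose,
      mul_add, Matrix.mul_smul, Matrix.trace_add, Matrix.trace_smul, smul_eq_mul,
      ← Matrix.mul_assoc] at this
    linarith [this]
  refine ⟨hA, fun X hX => ?_⟩
  set Y : Matrix (Fin p) (Fin p) ℝ := X - Xstar with hYdef
  have hXP : X * Pmat = Y * Pmat + Xstar * Pmat := by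
    rw [hYdef, Matrix.sub_mul, sub_add_cancel]
  have e1 : ∀ i j, X i j - C₁ i j = Y i j + (Xstar - C₁) i j := fun i j => by
    simp only [hYdef, Matrix.sub_apply]; ring
  have e2 : ∀ i j, X i j - C₂ i j = Y i j + (Xstar - C₂) i j := fun i j => by
    simp only [hYdef, Matrix.sub_apply]; ring
  have e3 : ∀ i j, (X * Pmat) i j - C₃ i j = (Y * Pmat) i j + (Xstar * Pmat - C₃) i j :=
    fun i j => by rw [hXP]; simp only [Matrix.add_apply, Matrix.sub_apply]; ring
  have htr : Matrix.trace (X * G) = Matrix.trace (Y * G) + Matrix.trace (Xstar * G) := by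
    rw [hYdef, Matrix.sub_mul, Matrix.trace_sub]; ring
  have hfX : f X = f Xstar
      + (ρ / 2) * (2 * (∑ i, ∑ j, Y i j ^ 2) + ∑ i, ∑ j, (Y * Pmat) i j ^ 2) := by
    rw [hf X, hf Xstar]
    simp_rw [e1, e2, e3]
    rw [expand_sq Y (Xstar - C₁), expand_sq Y (Xstar - C₂),
      expand_sq (Y * Pmat) (Xstar * Pmat - C₃), htr]
    have h0 := hcross Y
    simp only [Matrix.sub_apply]
    linear_combination h0
  have hY0 : Y ≠ 0 := sub_ne_zero.mpr hX
  obtain ⟨i, hi⟩ := Function.ne_iff.mp hY0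
  obtain ⟨j, hj⟩ := Function.ne_iff.mp hi
  have hpos : 0 < ∑ i, ∑ j, Y i j ^ 2 := by
    refine Finset.sum_pos' (fun i _ => Finset.sum_nonneg fun j _ => sq_nonneg _)
      ⟨i, Finset.mem_univ i, Finset.sum_pos' (fun j _ => sq_nonneg _)
        ⟨j, Finset.mem_univ j, lt_of_le_of_ne (sq_nonneg _) (Ne.symm (pow_ne_zero 2 hj))⟩⟩
  have hnn : 0 ≤ ∑ i, ∑ j, (Y * Pmat) i j ^ 2 :=
    Finset.sum_nonneg fun i _ => Finset.sum_nonneg fun j _ => sq_nonneg _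
  rw [hfX]
  nlinarith [hρ, hpos, hnn]
end
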